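/- Let μ be a probability measure on a countable set S with finite Shannon entropy. Then Σ_x μ(x) log(Σ_y min(μ(y)/μ(x), 1)) ≥ (1/2) Ent(μ) - 1, where the outer sum ranges over x with μ(x) > 0. -/

import Mathlib

private lemma neg_mul_log_le_inv_exp {s : ℝ} (hs : 0 < s) : -(s * Real.log s) ≤ Real.exp (-1) := by
  have h := Real.log_le_sub_one_of_pos (x := (Real.exp 1 * s)⁻¹) (by positivity)
  rw [Real.log_inv, Real.log_mul (Real.exp_ne_zero 1) hs.ne', Real.log_exp] at h
  have h2 : -Real.log s ≤ (Real.exp 1 * s)⁻¹ := by linarith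
  have h3 : -(s * Real.log s) = s * (-Real.log s) := by ring
  rw [h3, Real.exp_neg]
  calc s * (-Real.log s) ≤ s * (Real.exp 1 * s)⁻¹ := mul_le_mul_of_nonneg_left h2 hs.le
    _ = (Real.exp 1)⁻¹ := by field_simp [mul_comm]

private lemma key_ineq {t : ℝ} (ht : 0 < t) {k : ℕ} (hk : 1 ≤ k) :
    -(t * Real.log t) ≤ 2 * (t * Real.log k) + Real.exp (-1) * (1 / (k:ℝ)^2) := by
  have hk0 : (0:ℝ) < k := by exact_mod_cast hk
  have hk2 : (0:ℝ) < (k:ℝ)^2 := by positivity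
  have hs : 0 < t * (k:ℝ)^2 := by positivity
  have h1 := neg_mul_log_le_inv_exp hs
  have h2 : Real.log (t * (k:ℝ)^2) = Real.log t + 2 * Real.log k := by
    rw [Real.log_mul ht.ne' hk2.ne', Real.log_pow]; push_cast; ring
  rw [h2] at h1
  have h3 : -(t*Real.log t) - 2*(t*Real.log k) ≤ Real.exp (-1) / (k:ℝ)^2 := by
    rw [le_div_iff₀ hk2]
    calc (-(t*Real.log t) - 2*(t*Real.log k)) * (k:ℝ)^2
        = -(t * (k:ℝ)^2 * (Real.log t + 2*Real.log k)) := by ring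
      _ ≤ Real.exp (-1) := h1
  rw [mul_one_div]
  linarith

private lemma hasSum_tele : HasSum (fun n : ℕ => 2 * (1/((n:ℝ)+1) - 1/((n:ℝ)+2))) 2 := by
  have hnn : ∀ n : ℕ, 0 ≤ 1/((n:ℝ)+1) - 1/((n:ℝ)+2) := by
    intro n
    have h1 : (0:ℝ) < (n:ℝ)+1 := by positivity
    have h2 : (0:ℝ) < (n:ℝ)+2 := by positivity
    have := one_div_le_one_div_of_le h1 (by linarith : (n:ℝ)+1 ≤ (n:ℝ)+2)
    linarith
  have h : HasSum (fun n : ℕ => (1/((n:ℝ)+1) - 1/((n:ℝ)+2))) 1 := by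
    rw [hasSum_iff_tendsto_nat_of_nonneg hnn]
    have key : ∀ N : ℕ, ∑ n ∈ Finset.range N, (1/((n:ℝ)+1) - 1/((n:ℝ)+2))
        = 1 - 1/((N:ℝ)+1) := by
      intro N
      have := Finset.sum_range_sub' (f := fun n : ℕ => 1/((n:ℝ)+1)) (n := N)
      rw [show (1:ℝ) - 1/((N:ℝ)+1) = 1 / (((0:ℕ):ℝ) + 1) - 1/((N:ℝ)+1) from by norm_num, ← this]
      apply Finset.sum_congr rfl
      intro i _
      push_cast
      ring
    simp only [key]
    have h0 : Filter.Tendsto (fun N : ℕ => 1/((N:ℝ)+1)) Filter.atTop (nhds 0) := by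
      exact_mod_cast tendsto_one_div_add_atTop_nhds_zero_nat (𝕜 := ℝ)
    simpa using Filter.Tendsto.const_sub 1 h0
  have := h.mul_left 2
  simpa using this

private lemma G_facts : Summable (fun n : ℕ => Real.exp (-1) * (1/((n:ℝ)+1)^2)) ∧
    (∑' n : ℕ, Real.exp (-1) * (1/((n:ℝ)+1)^2)) ≤ 2 := by
  set G : ℕ → ℝ := fun n => Real.exp (-1) * (1/((n:ℝ)+1)^2) with hG
  have hGnn : ∀ n, 0 ≤ G n := fun n => by positivity
  have hGle : ∀ n : ℕ, G n ≤ 2 * (1/((n:ℝ)+1) - 1/((n:ℝ)+2)) := by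
    intro n
    have he : Real.exp (-1) ≤ 1 := by
      rw [← Real.exp_zero]; exact Real.exp_le_exp.mpr (by norm_num)
    have hpos : (0:ℝ) < 1/((n:ℝ)+1)^2 := by positivity
    have h1 : G n ≤ 1/((n:ℝ)+1)^2 := by
      calc G n ≤ 1 * (1/((n:ℝ)+1)^2) := mul_le_mul_of_nonneg_right he hpos.le
        _ = 1/((n:ℝ)+1)^2 := one_mul _
    have h2 : 2 * (1/((n:ℝ)+1) - 1/((n:ℝ)+2)) - 1/((n:ℝ)+1)^2
        = (n:ℝ) / (((n:ℝ)+1)^2 * ((n:ℝ)+2)) := by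
      have ha : ((n:ℝ)+1) ≠ 0 := by positivity
      have hb : ((n:ℝ)+2) ≠ 0 := by positivity
      field_simp
      ring
    have h3 : (0:ℝ) ≤ (n:ℝ) / (((n:ℝ)+1)^2 * ((n:ℝ)+2)) := by positivity
    linarith
  have hGsmb : Summable G := Summable.of_nonneg_of_le hGnn hGle hasSum_tele.summable
  refine ⟨hGsmb, ?_⟩
  calc ∑' n, G n ≤ ∑' n : ℕ, 2 * (1/((n:ℝ)+1) - 1/((n:ℝ)+2)) :=
        Summable.tsum_le_tsum hGle hGsmb hasSum_tele.summable
    _ = 2 := hasSum_tele.tsum_eq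

theorem stmt1 {S : Type*} [Countable S] (μ : S → ℝ)
    (hnn : ∀ x, 0 ≤ μ x) (hsum : ∑' x, μ x = 1)
    (hent : Summable (fun x => μ x * Real.log (μ x))) :
    (1/2) * (-∑' x, μ x * Real.log (μ x)) - 1
      ≤ ∑' x, (if 0 < μ x then μ x * Real.log (∑' y, min (μ y / μ x) 1) else 0) := by
  classical
  obtain ⟨ι, hι⟩ := Countable.exists_injective_nat S
  have hμsum : Summable μ := by
    by_contra hc
    rw [tsum_eq_zero_of_not_summable hc] at hsum
    norm_num at hsum
  have hμle1 : ∀ x, μ x ≤ 1 := by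
    intro x
    have := Summable.le_tsum hμsum x (fun y _ => hnn y)
    rwa [hsum] at this
  set B : S → Set S := fun x => {y | 0 < μ y ∧ (μ x < μ y ∨ (μ y = μ x ∧ ι y ≤ ι x))} with hB
  have hBle : ∀ x y, y ∈ B x → μ x ≤ μ y := by
    intro x y hy
    rcases hy.2 with h | h
    · exact h.le
    · exact h.1.ge
  have hBfin : ∀ x, 0 < μ x → (B x).Finite := by
    intro x hx
    have hcof : μ ⁻¹' (Set.Iio (μ x)) ∈ Filter.cofinite :=
      hμsum.tendsto_cofinite_zero (Iio_mem_nhds hx)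
    have hfin : {y | ¬ μ y < μ x}.Finite := hcof
    apply hfin.subset
    intro y hy
    exact not_lt.mpr (hBle x y hy)
  have hmemB : ∀ x, 0 < μ x → x ∈ B x := fun x hx => ⟨hx, Or.inr ⟨rfl, le_refl _⟩⟩
  have hr1 : ∀ x, 0 < μ x → 1 ≤ (B x).ncard := by
    intro x hx
    exact (Set.ncard_pos (hBfin x hx)).mpr ⟨x, hmemB x hx⟩
  -- inner sum facts
  have hinner_smb : ∀ x, 0 < μ x → Summable (fun y => min (μ y / μ x) 1) := by
    intro x hx
    exact Summable.of_nonneg_of_le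
      (fun y => le_min (div_nonneg (hnn y) hx.le) zero_le_one)
      (fun y => min_le_left _ _) (hμsum.div_const _)
  have hinner_ge1 : ∀ x, 0 < μ x → (1:ℝ) ≤ ∑' y, min (μ y / μ x) 1 := by
    intro x hx
    have := Summable.le_tsum (hinner_smb x hx) x
      (fun y _ => le_min (div_nonneg (hnn y) hx.le) zero_le_one)
    simpa [div_self hx.ne'] using this
  have hinner_le : ∀ x, 0 < μ x → (∑' y, min (μ y / μ x) 1) ≤ 1 / μ x := by
    intro x hx
    have h1 : (∑' y, μ y / μ x) = 1 / μ x := by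
      rw [tsum_div_const, hsum]
    rw [← h1]
    exact Summable.tsum_le_tsum (fun y => min_le_left _ _) (hinner_smb x hx) (hμsum.div_const _)
  have hinner_ge : ∀ x, 0 < μ x → ((B x).ncard : ℝ) ≤ ∑' y, min (μ y / μ x) 1 := by
    intro x hx
    have hfin := hBfin x hx
    have hsum_eq : ∑ y ∈ hfin.toFinset, min (μ y / μ x) 1 = (hfin.toFinset.card : ℝ) := by
      rw [Finset.sum_congr rfl (g := fun _ => (1:ℝ)) (fun y hy =>
        min_eq_right ((one_le_div hx).mpr (hBle x y (hfin.mem_toFinset.mp hy))))]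
      simp
    have hcard : ((B x).ncard : ℝ) = (hfin.toFinset.card : ℝ) := by
      rw [Set.ncard_eq_toFinset_card _ hfin]
    rw [hcard, ← hsum_eq]
    exact Summable.sum_le_tsum _ (fun y _ => le_min (div_nonneg (hnn y) hx.le) zero_le_one)
      (hinner_smb x hx)
  -- strict monotonicity of ncard along the order
  have hrlt : ∀ x y, 0 < μ y → x ∈ B y → x ≠ y → (B x).ncard < (B y).ncard := by
    intro x y hy hxy hne
    have hx : 0 < μ x := hxy.1
    have hfy := hBfin y hy
    have hynotBx : y ∉ B x := by
      intro hyBx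
      rcases hxy.2 with h1 | ⟨h1, h1'⟩ <;> rcases hyBx.2 with h2 | ⟨h2, h2'⟩
      · exact absurd h1 (lt_asymm h2)
      · exact absurd h1 (by rw [h2]; exact lt_irrefl _)
      · exact absurd h2 (by rw [h1]; exact lt_irrefl _)
      · exact hne (hι (le_antisymm h1' h2'))
    have hsub : B x ⊆ B y \ {y} := by
      intro z hz
      refine ⟨⟨hz.1, ?_⟩, ?_⟩
      · rcases hz.2 with h1 | ⟨h1, h1'⟩ <;> rcases hxy.2 with h2 | ⟨h2, h2'⟩
        · exact Or.inl (h2.trans h1)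
        · exact Or.inl (h2 ▸ h1)
        · exact Or.inl (h1 ▸ h2)
        · exact Or.inr ⟨h1.trans h2, h1'.trans h2'⟩
      · intro hzy
        rw [Set.mem_singleton_iff] at hzy
        exact hynotBx (hzy ▸ hz)
    calc (B x).ncard ≤ (B y \ {y}).ncard :=
          Set.ncard_le_ncard hsub hfy.diff
      _ < (B y).ncard := Set.ncard_diff_singleton_lt_of_mem (hmemB y hy) hfy
  have hrne : ∀ x y, 0 < μ x → 0 < μ y → x ≠ y → (B x).ncard ≠ (B y).ncard := by
    intro x y hx hy hne
    rcases lt_trichotomy (μ x) (μ y) with h | h | h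
    · exact (hrlt y x hx ⟨hy, Or.inl h⟩ hne.symm).ne'
    · rcases lt_or_gt_of_ne (fun hιeq => hne (hι hιeq) : ι x ≠ ι y) with h' | h'
      · exact (hrlt x y hy ⟨hx, Or.inr ⟨h, h'.le⟩⟩ hne).ne
      · exact (hrlt y x hx ⟨hy, Or.inr ⟨h.symm, h'.le⟩⟩ hne.symm).ne'
    · exact (hrlt x y hy ⟨hx, Or.inl h⟩ hne).ne
  -- define the pieces
  set E := ∑' x, μ x * Real.log (μ x) with hE
  set h : S → ℝ := fun x => -(μ x * Real.log (μ x)) with hhdef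
  set Tf : S → ℝ := fun x => if 0 < μ x then μ x * Real.log (∑' y, min (μ y / μ x) 1) else 0
    with hTfdef
  set f : S → ℝ := fun x => if 0 < μ x then μ x * Real.log (((B x).ncard : ℝ)) else 0 with hfdef
  set g : S → ℝ := fun x => if 0 < μ x then Real.exp (-1) * (1/(((B x).ncard : ℝ))^2) else 0
    with hgdef
  have hTf_nn : ∀ x, 0 ≤ Tf x := by
    intro x
    by_cases hx : 0 < μ x
    · simp only [hTfdef, if_pos hx]
      exact mul_nonneg hx.le (Real.log_nonneg (hinner_ge1 x hx))
    · simp [hTfdef, hx]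
  have hTf_le_h : ∀ x, Tf x ≤ h x := by
    intro x
    by_cases hx : 0 < μ x
    · simp only [hTfdef, if_pos hx, hhdef]
      have hlog : Real.log (∑' y, min (μ y / μ x) 1) ≤ -Real.log (μ x) := by
        have h1 := Real.log_le_log (lt_of_lt_of_le one_pos (hinner_ge1 x hx)) (hinner_le x hx)
        rwa [one_div, Real.log_inv] at h1
      have := mul_le_mul_of_nonneg_left hlog hx.le
      linarith
    · have h0 : μ x = 0 := le_antisymm (not_lt.mp hx) (hnn x)
      simp [hTfdef, hhdef, hx, h0]
  have hh_smb : Summable h := hent.neg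
  have hTf_smb : Summable Tf := Summable.of_nonneg_of_le hTf_nn hTf_le_h hh_smb
  have hf_le_Tf : ∀ x, f x ≤ Tf x := by
    intro x
    by_cases hx : 0 < μ x
    · simp only [hfdef, hTfdef, if_pos hx]
      have hpos : (0:ℝ) < ((B x).ncard : ℝ) := by exact_mod_cast hr1 x hx
      exact mul_le_mul_of_nonneg_left (Real.log_le_log hpos (hinner_ge x hx)) hx.le
    · simp [hfdef, hTfdef, hx]
  have hf_nn : ∀ x, 0 ≤ f x := by
    intro x
    by_cases hx : 0 < μ x
    · simp only [hfdef, if_pos hx]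
      have h1 : (1:ℝ) ≤ ((B x).ncard : ℝ) := by exact_mod_cast hr1 x hx
      exact mul_nonneg hx.le (Real.log_nonneg h1)
    · simp [hfdef, hx]
  have hf_smb : Summable f := Summable.of_nonneg_of_le hf_nn hf_le_Tf hTf_smb
  have hg_nn : ∀ x, 0 ≤ g x := by
    intro x
    by_cases hx : 0 < μ x
    · simp only [hgdef, if_pos hx]; positivity
    · simp [hgdef, hx]
  have hkey : ∀ x, h x ≤ 2 * f x + g x := by
    intro x
    by_cases hx : 0 < μ x
    · simp only [hhdef, hfdef, hgdef, if_pos hx]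
      exact key_ineq hx (hr1 x hx)
    · have h0 : μ x = 0 := le_antisymm (not_lt.mp hx) (hnn x)
      simp [hhdef, hfdef, hgdef, hx, h0]
  obtain ⟨hGsmb, hGts⟩ := G_facts
  have hgsum_le : ∀ u : Finset S, ∑ x ∈ u, g x ≤ 2 := by
    intro u
    have h1 : ∑ x ∈ u.filter (fun x => 0 < μ x), g x = ∑ x ∈ u, g x := by
      apply Finset.sum_filter_of_ne
      intro x _ hgx
      by_contra hx
      simp [hgdef, hx] at hgx
    set u' := u.filter (fun x => 0 < μ x) with hu'
    set e : S → ℕ := fun x => (B x).ncard - 1 with hedef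
    have hinj : ∀ x ∈ u', ∀ y ∈ u', e x = e y → x = y := by
      intro x hx' y hy' hexy
      have hx := (Finset.mem_filter.mp hx').2
      have hy := (Finset.mem_filter.mp hy').2
      by_contra hne
      apply hrne x y hx hy hne
      have h1 := hr1 x hx
      have h2 := hr1 y hy
      simp only [hedef] at hexy
      omega
    have h2 : ∑ x ∈ u', g x = ∑ n ∈ u'.image e, (Real.exp (-1) * (1/((n:ℝ)+1)^2)) := by
      rw [Finset.sum_image hinj]
      apply Finset.sum_congr rfl
      intro x hx'
      have hx := (Finset.mem_filter.mp hx').2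
      have hc : ((e x : ℕ):ℝ) + 1 = ((B x).ncard : ℝ) := by
        have h1 := hr1 x hx
        have h2 : (e x) + 1 = (B x).ncard := by simp only [hedef]; omega
        exact_mod_cast congrArg (Nat.cast (R := ℝ)) h2
      simp only [hgdef, if_pos hx]
      rw [hc]
    calc ∑ x ∈ u, g x = ∑ n ∈ u'.image e, (Real.exp (-1) * (1/((n:ℝ)+1)^2)) := by
          rw [← h1, h2]
      _ ≤ ∑' n : ℕ, Real.exp (-1) * (1/((n:ℝ)+1)^2) :=
          Summable.sum_le_tsum _ (fun n _ => by positivity) hGsmb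
      _ ≤ 2 := hGts
  have hg_smb : Summable g := summable_of_sum_le hg_nn hgsum_le
  have hg_ts : ∑' x, g x ≤ 2 := Summable.tsum_le_of_sum_le hg_smb hgsum_le
  have hmain : ∑' x, h x ≤ ∑' x, (2 * f x + g x) :=
    Summable.tsum_le_tsum hkey hh_smb ((hf_smb.mul_left 2).add hg_smb)
  have hsplit : ∑' x, (2 * f x + g x) = 2 * ∑' x, f x + ∑' x, g x := by
    rw [Summable.tsum_add (hf_smb.mul_left 2) hg_smb, tsum_mul_left]
  have hfT : ∑' x, f x ≤ ∑' x, Tf x := Summable.tsum_le_tsum hf_le_Tf hf_smb hTf_smb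
  have hhE : ∑' x, h x = -E := by
    simp only [hhdef]
    rw [tsum_neg]
  linarith
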